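/- Consider the best-response opinion dynamics on a finite simple connected graph G with stubbornness parameters K_i ≥ 0, fully stubborn set S_F, and at least one stubborn agent. Let F = (I − A)^{−1} B. Then all entries of F are nonnegative, each row of F sums to 1, and F_{ij} = 0 whenever j is not stubborn (j ∉ S_F and K_j = 0). Consequently, for every agent i the equilibrium opinion x_i(∞) = Σ_j F_{ij} x_j(0) is a convex combination of the initial opinions of the stubborn agents, and the initial opinions of non-stubborn agents have no effect on the equilibrium. -/

import Mathlib

open Matrix Finset

private lemma walk_prop {n : ℕ} {G : SimpleGraph (Fin n)} {T : Set (Fin n)}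
    (hcl : ∀ i ∈ T, ∀ j, G.Adj i j → j ∈ T) :
    ∀ {i j : Fin n}, G.Walk i j → i ∈ T → j ∈ T := by
  intro i j p
  induction p with
  | nil => exact id
  | cons h p ih => intro hi; exact ih (hcl _ hi _ h)

/-- Minimum principle: any solution of `u = A u + b` with `b ≥ 0` is nonnegative. -/
private lemma minpr {n : ℕ} {G : SimpleGraph (Fin n)} [DecidableRel G.Adj]
    (hconn : G.Connected) {K : Fin n → ℝ} (hK : ∀ i, 0 ≤ K i)
    {SF : Finset (Fin n)} {A : Matrix (Fin n) (Fin n) ℝ}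
    (hA : ∀ i j, A i j = if i ∈ SF then 0
        else if G.Adj i j then 1 / ((G.degree i : ℝ) + K i) else 0)
    (hstub : SF.Nonempty ∨ ∃ i, 0 < K i)
    (u b : Fin n → ℝ) (hb : ∀ i, 0 ≤ b i)
    (hu : ∀ i, u i = ∑ j, A i j * u j + b i) :
    ∀ i, 0 ≤ u i := by
  have hApos : ∀ i j, 0 ≤ A i j := by
    intro i j
    rw [hA]
    split
    · exact le_refl 0
    · split
      · exact div_nonneg zero_le_one (add_nonneg (Nat.cast_nonneg _) (hK i))
      · exact le_refl 0
  -- row sums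
  have hs : ∀ i, i ∉ SF → ∑ j, A i j =
      (G.degree i : ℝ) * (1 / ((G.degree i : ℝ) + K i)) := by
    intro i hi
    have h1 : ∀ j, A i j = if G.Adj i j then 1 / ((G.degree i : ℝ) + K i) else 0 := by
      intro j; rw [hA]; simp [hi]
    simp_rw [h1]
    rw [← Finset.sum_filter, ← SimpleGraph.neighborFinset_eq_filter,
      Finset.sum_const, G.card_neighborFinset_eq_degree, nsmul_eq_mul]
  have hsle : ∀ i, ∑ j, A i j ≤ 1 := by
    intro i
    by_cases hi : i ∈ SF
    · have h0 : ∀ j, A i j = 0 := by intro j; rw [hA]; simp [hi]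
      simp [h0]
    · rw [hs i hi]
      rcases eq_or_lt_of_le (add_nonneg (Nat.cast_nonneg (α := ℝ) (G.degree i)) (hK i)) with h | h
      · rw [← h]; simp
      · rw [mul_one_div, div_le_one h]
        have := hK i; linarith [Nat.cast_nonneg (α := ℝ) (G.degree i)]
  have hn : Nonempty (Fin n) := by
    rcases hstub with ⟨i, _⟩ | ⟨i, _⟩ <;> exact ⟨i⟩
  by_contra hneg
  push_neg at hneg
  obtain ⟨i0, -, hmin⟩ := Finset.exists_min_image Finset.univ u Finset.univ_nonempty
  have hmin : ∀ j, u i0 ≤ u j := fun j => hmin j (Finset.mem_univ j)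
  set m := u i0 with hm
  have hmneg : m < 0 := by
    obtain ⟨i, hi⟩ := hneg
    exact lt_of_le_of_lt (hmin i) hi
  -- key claim about vertices achieving the minimum
  have key : ∀ i, u i = m → (i ∉ SF ∧ ∑ j, A i j = 1 ∧ ∀ j, G.Adj i j → u j = m) := by
    intro i hui
    have h1 : ∑ j, A i j * m ≤ ∑ j, A i j * u j := by
      apply Finset.sum_le_sum
      intro j _
      exact mul_le_mul_of_nonneg_left (hmin j) (hApos i j)
    have h2 : (∑ j, A i j) * m + b i ≤ u i := by
      rw [hu i, Finset.sum_mul] at *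
      linarith
    have hs1 : ∑ j, A i j = 1 := by
      nlinarith [hsle i, hb i, hui]
    have hiSF : i ∉ SF := by
      intro hi
      have h0 : ∀ j, A i j = 0 := by intro j; rw [hA]; simp [hi]
      simp [h0] at hs1
    refine ⟨hiSF, hs1, ?_⟩
    have hbz : b i = 0 := by
      nlinarith [h2, hb i, hs1, hui]
    have hsumeq : ∑ j, A i j * (u j - m) = 0 := by
      have e1 : ∑ j, A i j * (u j - m) = (∑ j, A i j * u j) - (∑ j, A i j) * m := by
        rw [Finset.sum_mul, ← Finset.sum_sub_distrib]
        congr 1; ext j; ring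
      have := hu i
      rw [e1, hs1]
      nlinarith [hui, hbz]
    have hterm : ∀ j ∈ Finset.univ, A i j * (u j - m) = 0 := by
      rw [← Finset.sum_eq_zero_iff_of_nonneg]
      · exact hsumeq
      · intro j _
        have := hmin j
        have := hApos i j
        nlinarith
    intro j hadj
    have hdK : (0:ℝ) < (G.degree i : ℝ) + K i := by
      by_contra h
      push_neg at h
      have h0 : (G.degree i : ℝ) + K i = 0 :=
        le_antisymm h (add_nonneg (Nat.cast_nonneg _) (hK i))
      rw [hs i hiSF, h0] at hs1
      simp at hs1
    have hAij : 0 < A i j := by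
      rw [hA]
      simp only [hiSF, if_false, hadj, if_true]
      exact one_div_pos.mpr hdK
    have h3 := hterm j (Finset.mem_univ j)
    have h4 := hmin j
    nlinarith
  -- propagate via connectivity
  have hT : ∀ j, u j = m := by
    intro j
    obtain ⟨p⟩ := hconn.preconnected i0 j
    exact walk_prop (T := {i | u i = m})
      (fun i hi j hadj => (key i hi).2.2 j hadj) p rfl
  -- contradiction with the stubborn agent
  rcases hstub with ⟨s0, hs0⟩ | ⟨i1, hK1⟩
  · exact (key s0 (hT s0)).1 hs0
  · obtain ⟨hi1, hs1, -⟩ := key i1 (hT i1)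
    rw [hs i1 hi1] at hs1
    have hdK : (0:ℝ) < (G.degree i1 : ℝ) + K i1 := add_pos_of_nonneg_of_pos (Nat.cast_nonneg _) hK1
    rw [mul_one_div, div_eq_one_iff_eq (ne_of_gt hdK)] at hs1
    linarith

theorem stmt6 {n : ℕ} (G : SimpleGraph (Fin n)) [DecidableRel G.Adj]
    (hconn : G.Connected)
    (K : Fin n → ℝ) (hK : ∀ i, 0 ≤ K i) (SF : Finset (Fin n))
    (A B : Matrix (Fin n) (Fin n) ℝ)
    (hA : ∀ i j, A i j = if i ∈ SF then 0
        else if G.Adj i j then 1 / ((G.degree i : ℝ) + K i) else 0)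
    (hB : ∀ i j, B i j = if i = j then
        (if i ∈ SF then 1 else K i / ((G.degree i : ℝ) + K i)) else 0)
    (hstub : SF.Nonempty ∨ ∃ i, 0 < K i)
    (F : Matrix (Fin n) (Fin n) ℝ) (hF : F = (1 - A)⁻¹ * B) :
    (∀ i j, 0 ≤ F i j) ∧
    (∀ i, ∑ j, F i j = 1) ∧
    (∀ j, j ∉ SF → K j = 0 → ∀ i, F i j = 0) ∧
    (∀ x0 x0' : Fin n → ℝ, (∀ j, (j ∈ SF ∨ 0 < K j) → x0 j = x0' j) →
      F.mulVec x0 = F.mulVec x0') := by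
  -- expansion of (1 - A).mulVec
  have expand : ∀ (v : Fin n → ℝ) (i : Fin n),
      ((1 - A).mulVec v) i = v i - ∑ j, A i j * v j := by
    intro v i
    simp [Matrix.mulVec, dotProduct, Matrix.sub_apply, Matrix.one_apply,
      sub_mul, Finset.sum_sub_distrib, ite_mul, Finset.sum_ite_eq]
  -- injectivity of 1 - A
  have hker : ∀ v : Fin n → ℝ, (1 - A).mulVec v = 0 → v = 0 := by
    intro v hv
    have hv' : ∀ i, v i = ∑ j, A i j * v j + (fun _ => (0:ℝ)) i := by
      intro i
      have h := congrFun hv i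
      rw [expand] at h
      simp only [Pi.zero_apply] at h
      simp; linarith
    have hpos := minpr hconn hK hA hstub v (fun _ => 0) (fun _ => le_refl 0) hv'
    have hv'' : ∀ i, (-v) i = ∑ j, A i j * (-v) j + (fun _ => (0:ℝ)) i := by
      intro i
      have h := hv' i
      have hsum : ∑ j, A i j * (-v) j = -∑ j, A i j * v j := by
        simp [mul_neg, Finset.sum_neg_distrib]
      simp only [Pi.neg_apply] at hsum ⊢
      rw [hsum]
      show -v i = -∑ j, A i j * v j + 0
      have h' : v i = ∑ j, A i j * v j + 0 := h
      linarith
    have hneg := minpr hconn hK hA hstub (-v) (fun _ => 0) (fun _ => le_refl 0) hv''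
    funext i
    have h1 := hpos i
    have h2 := hneg i
    simp only [Pi.neg_apply] at h2
    simp only [Pi.zero_apply]
    linarith
  have hinj : Function.Injective (1 - A).mulVec := by
    intro x y h
    have := hker (x - y) (by rw [Matrix.mulVec_sub, h, sub_self])
    funext i
    have := congrFun this i
    simp only [Pi.sub_apply, Pi.zero_apply] at this
    linarith
  have hdet : IsUnit (1 - A).det :=
    (Matrix.isUnit_iff_isUnit_det _).mp (Matrix.mulVec_injective_iff_isUnit.mp hinj)
  -- basic facts about B
  have hBnn : ∀ i j, 0 ≤ B i j := by
    intro i j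
    rw [hB]
    split
    · split
      · norm_num
      · exact div_nonneg (hK i) (add_nonneg (Nat.cast_nonneg _) (hK i))
    · exact le_refl 0
  -- (1 - A) * F = B
  have hFid : (1 - A) * F = B := by
    rw [hF, ← Matrix.mul_assoc, Matrix.mul_nonsing_inv _ hdet, Matrix.one_mul]
  have hFeq : ∀ i j, F i j = ∑ k, A i k * F k j + B i j := by
    intro i j
    have h := congrFun (congrFun hFid i) j
    rw [Matrix.mul_apply] at h
    simp only [Matrix.sub_apply, Matrix.one_apply, sub_mul, ite_mul, one_mul, zero_mul,
      Finset.sum_sub_distrib, Finset.sum_ite_eq, Finset.mem_univ, if_true] at h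
    linarith
  -- Part 1: nonnegativity
  have part1 : ∀ i j, 0 ≤ F i j := by
    intro i j
    exact minpr hconn hK hA hstub (fun i => F i j) (fun i => B i j)
      (fun i => hBnn i j) (fun i => hFeq i j) i
  -- positivity of denominators for non-fully-stubborn agents
  have hpos : ∀ i, i ∉ SF → (0:ℝ) < (G.degree i : ℝ) + K i := by
    intro i hi
    rcases lt_or_eq_of_le (add_nonneg (Nat.cast_nonneg (α := ℝ) (G.degree i)) (hK i)) with h | h
    · exact h
    -- degree i = 0 and K i = 0
    exfalso
    have hd : (G.degree i : ℝ) = 0 := by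
      have := hK i
      have := Nat.cast_nonneg (α := ℝ) (G.degree i)
      linarith
    have hKi : K i = 0 := by rw [← hd] at h ⊢; linarith
    have hdn : G.degree i = 0 := by exact_mod_cast hd
    -- get another stubborn vertex s ≠ i, walk gives i a neighbor
    have hne : ∃ s : Fin n, s ≠ i := by
      rcases hstub with ⟨s, hs⟩ | ⟨s, hKs⟩
      · exact ⟨s, fun he => hi (he ▸ hs)⟩
      · exact ⟨s, fun he => by rw [he, hKi] at hKs; exact lt_irrefl 0 hKs⟩
    obtain ⟨s, hsne⟩ := hne
    obtain ⟨p⟩ := hconn.preconnected i s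
    cases p with
    | nil => exact hsne rfl
    | cons hadj q =>
      have : 0 < G.degree i := (G.degree_pos_iff_exists_adj i).mpr ⟨_, hadj⟩
      omega
  -- Part 2: row sums
  have hones : (1 - A).mulVec (fun _ => (1:ℝ)) = B.mulVec (fun _ => 1) := by
    funext i
    rw [expand]
    have hrhs : (B.mulVec fun _ => (1:ℝ)) i =
        (if i ∈ SF then (1:ℝ) else K i / ((G.degree i : ℝ) + K i)) := by
      simp only [Matrix.mulVec, dotProduct, mul_one]
      have : ∀ j, B i j = if i = j then
          (if i ∈ SF then (1:ℝ) else K i / ((G.degree i : ℝ) + K i)) else 0 := hB i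
      simp_rw [this]
      rw [Finset.sum_ite_eq]
      simp
    rw [hrhs]
    by_cases hi : i ∈ SF
    · have h0 : ∀ j, A i j = 0 := by intro j; rw [hA]; simp [hi]
      simp [h0, hi]
    · have h1 : ∀ j, A i j * 1 = if G.Adj i j then 1 / ((G.degree i : ℝ) + K i) else 0 := by
        intro j; rw [hA]; simp [hi]
      simp_rw [h1]
      rw [← Finset.sum_filter, ← SimpleGraph.neighborFinset_eq_filter,
        Finset.sum_const, G.card_neighborFinset_eq_degree, nsmul_eq_mul]
      simp only [hi, if_false]
      have hd := hpos i hi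
      field_simp
      ring
  have part2 : ∀ i, ∑ j, F i j = 1 := by
    intro i
    have h1 : F.mulVec (fun _ => (1:ℝ)) = fun _ => 1 := by
      rw [hF, ← Matrix.mulVec_mulVec, ← hones, Matrix.mulVec_mulVec,
        Matrix.nonsing_inv_mul _ hdet, Matrix.one_mulVec]
    have := congrFun h1 i
    simp only [Matrix.mulVec, dotProduct, mul_one] at this
    exact this
  -- Part 3: zero columns at non-stubborn agents
  have part3 : ∀ j, j ∉ SF → K j = 0 → ∀ i, F i j = 0 := by
    intro j hj hKj i
    rw [hF, Matrix.mul_apply]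
    apply Finset.sum_eq_zero
    intro k _
    have : B k j = 0 := by
      rw [hB]
      split
      · split
        · rename_i hkj hk
          exact absurd (hkj ▸ hk) hj
        · rename_i hkj _
          rw [hkj, hKj, zero_div]
      · rfl
    rw [this, mul_zero]
  refine ⟨part1, part2, part3, ?_⟩
  intro x0 x0' hx
  funext i
  simp only [Matrix.mulVec, dotProduct]
  apply Finset.sum_congr rfl
  intro j _
  by_cases hj : j ∈ SF ∨ 0 < K j
  · rw [hx j hj]
  · push_neg at hj
    have hKj : K j = 0 := le_antisymm (hj.2) (hK j)
    rw [part3 j hj.1 hKj i, zero_mul, zero_mul]
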